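/- The map Σ(s, u) = (cos s, sin s cos s, (1/24)(-9 sin s - sin 3s) + u) is injective on [0, 2π) × [0, 1/3]. -/
import Mathlib

abbrev H : Type := ℝ × ℝ × ℝ

/-- The lifted surface obtained by translating the lift of the lemniscate of Gerono
vertically by heights u ∈ [0, 1/3]. -/
noncomputable def SigmaMap (p : ℝ × ℝ) : H :=
  (Real.cos p.1, Real.sin p.1 * Real.cos p.1,
    (1 / 24) * (-9 * Real.sin p.1 - Real.sin (3 * p.1)) + p.2)

/-- Σ is injective on [0, 2π) × [0, 1/3]. -/
theorem sigma_injective :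
    Set.InjOn SigmaMap (Set.Ico 0 (2 * Real.pi) ×ˢ Set.Icc 0 (1 / 3 : ℝ)) := by
  rintro ⟨s, u⟩ ⟨⟨hs0, hs2⟩, hu0, hu1⟩ ⟨s', u'⟩ ⟨⟨hs0', hs2'⟩, hu0', hu1'⟩ heq
  dsimp only at hs0 hs2 hu0 hu1 hs0' hs2' hu0' hu1'
  have hpi := Real.pi_pos
  simp only [SigmaMap, Prod.mk.injEq] at heq
  obtain ⟨h1, h2, h3⟩ := heq
  -- reduce to showing s = s'
  suffices hss : s = s' by
    subst hss
    have : u = u' := by linarith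
    simp [this]
  obtain ⟨k, hk | hk⟩ := Real.cos_eq_cos_iff.mp h1
  · -- s' = 2kπ + s, so k = 0
    have hkl : (-1 : ℝ) < (k : ℝ) := by nlinarith
    have hku : (k : ℝ) < 1 := by nlinarith
    have hkl' : (-1 : ℤ) < k := by exact_mod_cast hkl
    have hku' : k < 1 := by exact_mod_cast hku
    have : k = 0 := by omega
    subst this; simp at hk; linarith
  · -- s' = 2kπ - s, so k = 0 or k = 1
    have hkl : (-1 : ℝ) < (k : ℝ) := by nlinarith
    have hku : (k : ℝ) < 2 := by nlinarith
    have hkl' : (-1 : ℤ) < k := by exact_mod_cast hkl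
    have hku' : k < 2 := by exact_mod_cast hku
    interval_cases k
    · -- s' = -s : both nonneg so both zero
      simp at hk
      have hs : s = 0 := by linarith
      have hs' : s' = 0 := by linarith
      rw [hs, hs']
    · -- s' = 2π - s
      push_cast at hk
      have hk' : s' = 2 * Real.pi - s := by linarith [hk]
      have hsin' : Real.sin s' = -Real.sin s := by
        rw [hk', Real.sin_two_pi_sub]
      have hcos' : Real.cos s' = Real.cos s := by
        rw [hk', Real.cos_two_pi_sub]
      have hzero : Real.sin s * Real.cos s = 0 := by
        rw [hsin', hcos'] at h2; linarith
      rcases mul_eq_zero.mp hzero with hz | hz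
      · -- sin s = 0, so s = π (s = 0 impossible since s' < 2π)
        have hspos : 0 < s := by
          rcases lt_or_eq_of_le hs0 with h | h
          · exact h
          · exfalso; rw [← h] at hk'; simp at hk'; linarith
        obtain ⟨n, hn⟩ := Real.sin_eq_zero_iff.mp hz
        have hnl : (0 : ℝ) < (n : ℝ) := by nlinarith
        have hnu : (n : ℝ) < 2 := by nlinarith
        have hnl' : (0 : ℤ) < n := by exact_mod_cast hnl
        have hnu' : n < 2 := by exact_mod_cast hnu
        have : n = 1 := by omega
        subst this
        push_cast at hn
        rw [hk', ← hn]; ring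
      · -- cos s = 0 : contradiction via third coordinate
        exfalso
        have hsq : Real.sin s ^ 2 = 1 := by
          have := Real.sin_sq_add_cos_sq s
          nlinarith
        have h3s : Real.sin (3 * s) = -Real.sin s := by
          rw [Real.sin_three_mul]
          linear_combination (-4 * Real.sin s) * hsq
        have h3s' : Real.sin (3 * s') = Real.sin s := by
          rw [hk', show 3 * (2 * Real.pi - s) = 2 * Real.pi - (3 * s - 4 * Real.pi) by ring,
            Real.sin_two_pi_sub,
            show 3 * s - 4 * Real.pi = (3 * s - 2 * Real.pi) - 2 * Real.pi by ring,
            Real.sin_sub_two_pi, Real.sin_sub_two_pi, h3s]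
          ring
        rw [hsin', h3s, h3s'] at h3
        nlinarith [hsq]
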